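/- On an almost Golden Riemannian manifold, the torsion T⁰ of the first canonical connection satisfies g(T⁰(X,Y),Z) − g(T⁰(Z,Y),X) + g(T⁰(J_φ X,Y), J_φ Z) − g(T⁰(J_φ Z,Y), J_φ X) = (1/2) g(N_{J_φ}(X,Z), Y) for all vector fields X, Y, Z. -/
import Mathlib


/-- Nijenhuis tensor `N_A(X,Y) = A²[X,Y] + [AX,AY] − A[AX,Y] − A[X,AY]`. -/
def nijenhuis {V : Type*} [LieRing V] [LieAlgebra ℝ V] (A : V →ₗ[ℝ] V) (X Y : V) : V :=
  A (A ⁅X, Y⁆) + ⁅A X, A Y⁆ - A ⁅A X, Y⁆ - A ⁅X, A Y⁆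

/-- The induced almost product structure `J_φ = (1/√5)(2φ − Id)`. -/
noncomputable def inducedJ {V : Type*} [AddCommGroup V] [Module ℝ V] (φ : V →ₗ[ℝ] V) : V →ₗ[ℝ] V :=
  (Real.sqrt 5)⁻¹ • (2 • φ - LinearMap.id)

/-- The first canonical covariant derivative `∇⁰_X Y = ∇_X Y − (1/2)(∇_X J)(J Y)`. -/
noncomputable def firstCanonical {V : Type*} [AddCommGroup V] [Module ℝ V]
    (nab : V →ₗ[ℝ] V →ₗ[ℝ] V) (J : V →ₗ[ℝ] V) (X Y : V) : V :=
  nab X Y - ((1 : ℝ)/2) • (nab X (J (J Y)) - J (nab X (J Y)))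

/-- The torsion `T⁰(X,Y) = ∇⁰_X Y − ∇⁰_Y X − [X,Y]` of the first canonical connection. -/
noncomputable def torsion0 {V : Type*} [LieRing V] [LieAlgebra ℝ V]
    (nab : V →ₗ[ℝ] V →ₗ[ℝ] V) (J : V →ₗ[ℝ] V) (X Y : V) : V :=
  firstCanonical nab J X Y - firstCanonical nab J Y X - ⁅X, Y⁆

/-- The key identity, for an abstract almost product structure `J` compatible with `g`. -/
theorem key_identity {V A : Type*} [LieRing V] [LieAlgebra ℝ V]
    [CommRing A] [Algebra ℝ A]
    (J : V →ₗ[ℝ] V) (hJ2 : ∀ v, J (J v) = v)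
    (g : V →ₗ[ℝ] V →ₗ[ℝ] A) (hsym : ∀ X Y : V, g X Y = g Y X)
    (hJg : ∀ X Y : V, g (J X) Y = g X (J Y))
    (Dv : V → A →ₗ[ℝ] A)
    (nab : V →ₗ[ℝ] V →ₗ[ℝ] V)
    (htf : ∀ X Y : V, nab X Y - nab Y X = ⁅X, Y⁆)
    (hmetric : ∀ X Y Z : V, Dv X (g Y Z) = g (nab X Y) Z + g Y (nab X Z)) :
    ∀ X Y Z : V,
      g (torsion0 nab J X Y) Z - g (torsion0 nab J Z Y) X
        + g (torsion0 nab J (J X) Y) (J Z)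
        - g (torsion0 nab J (J Z) Y) (J X)
      = ((1 : ℝ)/2) • g (nijenhuis J X Z) Y := by
  intro X Y Z
  have M : ∀ a b c : V, g (nab a b) c + g (nab a c) b = Dv a (g b c) := fun a b c => by
    rw [hmetric a b c]; linear_combination hsym (nab a c) b
  have Bk : ∀ a b c : V, g (nab a b) c - g (nab b a) c = g ⁅a,b⁆ c := fun a b c => by
    have h := congrArg (fun w => g w c) (htf a b); simpa using h
  have SK : ∀ a b c : V, g ⁅a,b⁆ c = - g ⁅b,a⁆ c := fun a b c => by
    have h : ⁅a,b⁆ = -⁅b,a⁆ := by rw [← lie_skew a b]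
    rw [h, map_neg, LinearMap.neg_apply]
  have GJJ : ∀ a b : V, g (J a) (J b) = g a b := fun a b => by rw [hJg, hJ2]
  have d1 := congrArg (Dv X) (GJJ Y Z)
  have d2 := congrArg (Dv (J Z)) ((hsym Y (J X)).trans (hJg X Y))
  have d3 := congrArg (Dv (J X)) (hJg Y Z)
  have d4 := congrArg (Dv Z) ((GJJ X Y).trans (hsym X Y))
  have E : (g (nab X (J Y)) (J Z) - g (nab Y (J X)) (J Z) - g ⁅X,Y⁆ Z)
      - (g (nab Z (J Y)) (J X) - g (nab Y (J Z)) (J X) - g ⁅Z,Y⁆ X)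
      + (g (nab (J X) (J Y)) Z - g (nab Y X) Z - g ⁅J X,Y⁆ (J Z))
      - (g (nab (J Z) (J Y)) X - g (nab Y Z) X - g ⁅J Z,Y⁆ (J X))
      = g ⁅X,Z⁆ Y + g ⁅J X,J Z⁆ Y - g ⁅J X,Z⁆ (J Y) - g ⁅X,J Z⁆ (J Y) := by
    linear_combination (M X (J Y) (J Z) - Bk X (J Z) (J Y) - M (J Z) X (J Y))
      + (M (J X) (J Y) Z - Bk (J X) Z (J Y) - M Z (J X) (J Y))
      + (Bk Y (J Z) (J X) - Bk Y (J X) (J Z) + M (J Z) Y (J X) - M (J X) Y (J Z)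
          - Bk (J Z) (J X) Y)
      + (Bk Y Z X - Bk Y X Z + M Z Y X - M X Y Z - Bk Z X Y)
      + d1 + d2 + d3 - d4
      + SK (J Z) Y (J X) - SK Y (J X) (J Z) - SK (J Z) (J X) Y
      + SK Z Y X - SK Y X Z - SK Z X Y
  have hT : ∀ P Q : V, torsion0 nab J P Q
      = ((1:ℝ)/2) • (J (nab P (J Q)) - J (nab Q (J P)) - ⁅P,Q⁆) := by
    intro P Q
    simp only [torsion0, firstCanonical, hJ2]
    linear_combination (norm := module) ((1:ℝ)/2) • htf P Q
  have hgT : ∀ P Q R : V, g (torsion0 nab J P Q) R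
      = ((1:ℝ)/2) • (g (nab P (J Q)) (J R) - g (nab Q (J P)) (J R) - g ⁅P,Q⁆ R) := by
    intro P Q R
    rw [hT]
    simp only [map_smul, map_sub, LinearMap.smul_apply, LinearMap.sub_apply, hJg]
  have hN : g (nijenhuis J X Z) Y
      = g ⁅X,Z⁆ Y + g ⁅J X,J Z⁆ Y - g ⁅J X,Z⁆ (J Y) - g ⁅X,J Z⁆ (J Y) := by
    simp only [nijenhuis, hJ2, map_add, map_sub, LinearMap.add_apply, LinearMap.sub_apply, hJg]
  rw [hgT, hgT, hgT, hgT, hN]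
  simp only [hJ2]
  linear_combination (norm := module) ((1:ℝ)/2 : ℝ) • E

/-- On an almost Golden Riemannian manifold, the torsion `T⁰` of the first canonical
connection satisfies
`g(T⁰(X,Y),Z) − g(T⁰(Z,Y),X) + g(T⁰(J_φX,Y),J_φZ) − g(T⁰(J_φZ,Y),J_φX)
  = (1/2) g(N_{J_φ}(X,Z), Y)`.  Here `nab` is the Levi-Civita connection of `g`. -/
theorem torsion0_welladapted_identity {V A : Type*} [LieRing V] [LieAlgebra ℝ V]
    [CommRing A] [Algebra ℝ A]
    (φ : V →ₗ[ℝ] V) (hφ : φ ∘ₗ φ = φ + LinearMap.id)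
    (g : V →ₗ[ℝ] V →ₗ[ℝ] A) (hsym : ∀ X Y : V, g X Y = g Y X)
    (hpure : ∀ X Y : V, g (φ X) Y = g X (φ Y))
    (Dv : V → A →ₗ[ℝ] A) (hD : ∀ (X : V) (a b : A), Dv X (a * b) = a * Dv X b + b * Dv X a)
    (nab : V →ₗ[ℝ] V →ₗ[ℝ] V)
    (htf : ∀ X Y : V, nab X Y - nab Y X = ⁅X, Y⁆)
    (hmetric : ∀ X Y Z : V, Dv X (g Y Z) = g (nab X Y) Z + g Y (nab X Z)) :
    ∀ X Y Z : V,
      g (torsion0 nab (inducedJ φ) X Y) Z - g (torsion0 nab (inducedJ φ) Z Y) X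
        + g (torsion0 nab (inducedJ φ) (inducedJ φ X) Y) (inducedJ φ Z)
        - g (torsion0 nab (inducedJ φ) (inducedJ φ Z) Y) (inducedJ φ X)
      = ((1 : ℝ)/2) • g (nijenhuis (inducedJ φ) X Z) Y := by
  have hφ' : ∀ w, φ (φ w) = φ w + w := fun w => by
    have := congrArg (fun f => f w) hφ; simpa using this
  have h5 : Real.sqrt 5 * Real.sqrt 5 = 5 := Real.mul_self_sqrt (by norm_num)
  have hJ2 : ∀ v, inducedJ φ (inducedJ φ v) = v := by
    intro v
    simp only [inducedJ, LinearMap.smul_apply, LinearMap.sub_apply, LinearMap.id_apply,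
      two_smul, LinearMap.add_apply, map_smul, map_sub, map_add, hφ', smul_add, smul_sub]
    match_scalars <;> field_simp <;> nlinarith [h5]
  have hJg : ∀ X Y : V, g (inducedJ φ X) Y = g X (inducedJ φ Y) := by
    intro X Y
    simp only [inducedJ, LinearMap.smul_apply, LinearMap.sub_apply, LinearMap.id_apply,
      two_smul, LinearMap.add_apply, map_smul, map_sub, map_add, LinearMap.map_smul₂,
      LinearMap.sub_apply, hpure]
  exact key_identity (inducedJ φ) hJ2 g hsym hJg Dv nab htf hmetric
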